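/- Let $U$ be a unitary operator on a Hilbert space $\mathcal{H}$, $h \in \mathcal{H}$, $S$ a bounded operator on $\mathcal{H}$ with range contained in the span of $h$, and $\mathcal{K}$ a closed subspace of $\mathcal{H}$ invariant under $U+S$. Suppose $(U+S)(\mathcal{K})$ is dense in $\mathcal{K}$, and either both $h \in \mathcal{K}$ and $U^{-1}h \in \mathcal{K}$, or both $h \notin \mathcal{K}$ and $U^{-1}h \notin \mathcal{K}$. Then the restriction $T$ of $U+S$ to $\mathcal{K}$ can be written as $T = V + R$, where $V$ is a unitary operator on $\mathcal{K}$ and $R$ is a bounded operator on $\mathcal{K}$ of rank at most $2$. -/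

import Mathlib

open Submodule
open scoped ComplexInnerProductSpace InnerProductSpace

section Aux

variable {H : Type*} [NormedAddCommGroup H] [InnerProductSpace ℂ H]

/-- Restriction of a unitary to an invariant subspace mapped onto itself. -/
noncomputable def isoRestrict (U : H ≃ₗᵢ[ℂ] H) (K : Submodule ℂ H)
    (h1 : ∀ x ∈ K, U x ∈ K) (h2 : ∀ x ∈ K, U.symm x ∈ K) : K ≃ₗᵢ[ℂ] K where
  toFun x := ⟨U x, h1 x x.2⟩
  invFun x := ⟨U.symm x, h2 x x.2⟩
  map_add' x y := by ext; simp
  map_smul' c x := by ext; simp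
  left_inv x := by ext; simp
  right_inv x := by ext; simp
  norm_map' x := U.norm_map x

theorem rank_aux (K : Submodule ℂ H) (R : K →L[ℂ] K) (v : H)
    (hv : ∀ x : K, ∃ c : ℂ, ((R x : K) : H) = c • v) :
    Module.rank ℂ (LinearMap.range (R : K →ₗ[ℂ] K)) ≤ 2 := by
  have hmem : ∀ z : LinearMap.range (R : K →ₗ[ℂ] K), ((z : K) : H) ∈ span ℂ {v} := by
    rintro ⟨z, hz⟩
    obtain ⟨x, rfl⟩ := hz
    obtain ⟨c, hc⟩ := hv x
    exact mem_span_singleton.mpr ⟨c, hc.symm⟩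
  let g : LinearMap.range (R : K →ₗ[ℂ] K) →ₗ[ℂ] span ℂ {v} :=
    LinearMap.codRestrict _ (K.subtype.comp (LinearMap.range (R : K →ₗ[ℂ] K)).subtype) hmem
  have hginj : Function.Injective g := by
    intro a b hab
    have h2 := congrArg Subtype.val hab
    exact Subtype.ext (Subtype.ext h2)
  calc Module.rank ℂ (LinearMap.range (R : K →ₗ[ℂ] K))
      ≤ Module.rank ℂ (span ℂ {v}) := g.rank_le_of_injective hginj
    _ ≤ Cardinal.mk ({v} : Set H) := rank_span_le ({v} : Set H)
    _ = 1 := Cardinal.mk_singleton v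
    _ ≤ 2 := by norm_num

theorem span_coeff {v z : H} (hv : v ≠ 0) (c : ℂ) (hz : z = c • v) :
    z = ⟪((‖v‖ : ℂ)⁻¹ • v : H), z⟫ • ((‖v‖ : ℂ)⁻¹ • v) := by
  subst hz
  have hnv : (‖v‖ : ℂ) ≠ 0 := by
    simpa using norm_ne_zero_iff.mpr hv
  rw [inner_smul_left, inner_smul_right, inner_self_eq_norm_sq_to_K, smul_smul]
  congr 1
  have hc : (starRingEnd ℂ) (‖v‖ : ℂ)⁻¹ = (‖v‖ : ℂ)⁻¹ := by
    simp [Complex.conj_ofReal]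
  rw [hc]
  field_simp
  rfl

end Aux


theorem good_case {H : Type*} [NormedAddCommGroup H] [InnerProductSpace ℂ H]
    (U : H ≃ₗᵢ[ℂ] H) (S : H →L[ℂ] H) (K : Submodule ℂ H)
    (v : H) (hv : ∀ x : K, ∃ c : ℂ, S (x : H) = c • v)
    (hUK : ∀ x ∈ K, U x ∈ K) (hKU : ∀ x ∈ K, U.symm x ∈ K)
    (hSK : ∀ x ∈ K, S x ∈ K) :
    ∃ (V : K ≃ₗᵢ[ℂ] K) (R : K →L[ℂ] K),
      Module.rank ℂ (LinearMap.range (R : K →ₗ[ℂ] K)) ≤ 2 ∧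
      ∀ x : K, U (x : H) + S (x : H) = (V x : H) + (R x : H) := by
  refine ⟨isoRestrict U K hUK hKU,
    (S.comp K.subtypeL).codRestrict K (fun x => hSK x x.2), ?_, ?_⟩
  · apply rank_aux K _ v
    intro x
    obtain ⟨c, hc⟩ := hv x
    exact ⟨c, hc⟩
  · intro x
    simp [isoRestrict]
    rfl

theorem closed_image {H : Type*} [NormedAddCommGroup H] [InnerProductSpace ℂ H]
    (U : H ≃ₗᵢ[ℂ] H) (E : Submodule ℂ H) (hEc : IsClosed (E : Set H)) :
    IsClosed ((E.map (U.toLinearEquiv : H →ₗ[ℂ] H) : Submodule ℂ H) : Set H) := by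
  have hset : ((E.map (U.toLinearEquiv : H →ₗ[ℂ] H) : Submodule ℂ H) : Set H)
      = ⇑(U.toHomeomorph) '' E := by
    ext y
    simp [Submodule.mem_map]
  rw [hset]
  exact U.toHomeomorph.isClosedMap _ hEc

theorem stmt_11 {H : Type*} [NormedAddCommGroup H] [InnerProductSpace ℂ H] [CompleteSpace H]
    (U : H ≃ₗᵢ[ℂ] H) (h : H) (S : H →L[ℂ] H)
    (hS : LinearMap.range (S : H →ₗ[ℂ] H) ≤ Submodule.span ℂ {h})
    (K : Submodule ℂ H) (hKc : IsClosed (K : Set H))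
    (hinv : ∀ x ∈ K, U x + S x ∈ K)
    (hdense : (K : Set H) ⊆ closure ((fun x => U x + S x) '' (K : Set H)))
    (halt : (h ∈ K ∧ U.symm h ∈ K) ∨ (h ∉ K ∧ U.symm h ∉ K)) :
    ∃ (V : K ≃ₗᵢ[ℂ] K) (R : K →L[ℂ] K),
      Module.rank ℂ (LinearMap.range (R : K →ₗ[ℂ] K)) ≤ 2 ∧
      ∀ x : K, U (x : H) + S (x : H) = (V x : H) + (R x : H) := by
  classical
  have hSspan : ∀ x : H, ∃ c : ℂ, S x = c • h := by
    intro x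
    obtain ⟨c, hc⟩ := mem_span_singleton.mp (hS (LinearMap.mem_range_self (S : H →ₗ[ℂ] H) x))
    exact ⟨c, hc.symm⟩
  rcases halt with ⟨hhK, hUhK⟩ | ⟨hhK, hUhK⟩
  · -- h ∈ K and U⁻¹ h ∈ K
    have hSK : ∀ x ∈ K, S x ∈ K := by
      intro x _
      obtain ⟨c, hc⟩ := hSspan x
      rw [hc]; exact K.smul_mem c hhK
    have hUK : ∀ x ∈ K, U x ∈ K := by
      intro x hx
      have h1 : U x + S x ∈ K := hinv x hx
      have h2 : U x = (U x + S x) - S x := by abel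
      rw [h2]; exact K.sub_mem h1 (hSK x hx)
    set MK := K.map (U.toLinearEquiv : H →ₗ[ℂ] H) with hMKdef
    have hMKc : IsClosed (MK : Set H) := closed_image U K hKc
    have hhMK : h ∈ MK := ⟨U.symm h, hUhK, by simp⟩
    have hTmem : ∀ x ∈ K, U x + S x ∈ MK := by
      intro x hx
      obtain ⟨c, hc⟩ := hSspan x
      rw [hc]
      exact MK.add_mem ⟨x, hx, rfl⟩ (MK.smul_mem c hhMK)
    have hKMK : (K : Set H) ⊆ (MK : Set H) := by
      intro x hx
      have h1 := hdense hx
      have h2 : ((fun x => U x + S x) '' (K : Set H)) ⊆ (MK : Set H) := by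
        rintro - ⟨y, hy, rfl⟩
        exact hTmem y hy
      have h3 := closure_mono h2 h1
      rwa [hMKc.closure_eq] at h3
    have hKU : ∀ x ∈ K, U.symm x ∈ K := by
      intro x hx
      obtain ⟨y, hy, rfl⟩ := hKMK hx
      simpa using hy
    exact good_case U S K h (fun x => hSspan x) hUK hKU hSK
  · by_cases hS0 : ∀ x ∈ K, S x = 0
    · -- trivial sub-case : S vanishes on K
      have hUK : ∀ x ∈ K, U x ∈ K := by
        intro x hx
        have h1 : U x + S x ∈ K := hinv x hx
        rwa [hS0 x hx, add_zero] at h1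
      set MK := K.map (U.toLinearEquiv : H →ₗ[ℂ] H) with hMKdef
      have hMKc : IsClosed (MK : Set H) := closed_image U K hKc
      have hTmem : ∀ x ∈ K, U x + S x ∈ MK := by
        intro x hx
        rw [hS0 x hx, add_zero]
        exact ⟨x, hx, rfl⟩
      have hKMK : (K : Set H) ⊆ (MK : Set H) := by
        intro x hx
        have h1 := hdense hx
        have h2 : ((fun x => U x + S x) '' (K : Set H)) ⊆ (MK : Set H) := by
          rintro - ⟨y, hy, rfl⟩
          exact hTmem y hy
        have h3 := closure_mono h2 h1
        rwa [hMKc.closure_eq] at h3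
      have hKU : ∀ x ∈ K, U.symm x ∈ K := by
        intro x hx
        obtain ⟨y, hy, rfl⟩ := hKMK hx
        simpa using hy
      exact good_case U S K 0 (fun x => ⟨0, by simp [hS0 x x.2]⟩) hUK hKU
        (fun x hx => by rw [hS0 x hx]; exact K.zero_mem)
    · -- main sub-case
      push_neg at hS0
      obtain ⟨x₀, hx₀K, hSx₀⟩ := hS0
      obtain ⟨c₀, hc₀⟩ := hSspan x₀
      have hc₀0 : c₀ ≠ 0 := by rintro rfl; rw [zero_smul] at hc₀; exact hSx₀ hc₀
      have hh0 : h ≠ 0 := by rintro rfl; rw [smul_zero] at hc₀; exact hSx₀ hc₀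
      -- the subspace E of K on which S vanishes
      set E : Submodule ℂ H := K ⊓ LinearMap.ker (S : H →ₗ[ℂ] H) with hEdef
      have hmemE : ∀ x : H, x ∈ E ↔ x ∈ K ∧ S x = 0 := by
        intro x
        simp [hEdef, Submodule.mem_inf, LinearMap.mem_ker]
      have hEK : ∀ x ∈ E, x ∈ K := fun x hx => ((hmemE x).mp hx).1
      have hSE : ∀ x ∈ E, S x = 0 := fun x hx => ((hmemE x).mp hx).2
      have hEc : IsClosed (E : Set H) := by
        have : (E : Set H) = (K : Set H) ∩ (LinearMap.ker (S : H →ₗ[ℂ] H) : Set H) := by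
          ext x; simp [hEdef]
        rw [this]
        exact hKc.inter (ContinuousLinearMap.isClosed_ker S)
      haveI : CompleteSpace E := hEc.completeSpace_coe
      have hUE : ∀ x ∈ E, U x ∈ K := by
        intro x hx
        have h1 := hinv x (hEK x hx)
        rwa [hSE x hx, add_zero] at h1
      have hdecomp : ∀ x ∈ K, ∃ c : ℂ, x - c • x₀ ∈ E := by
        intro x hx
        obtain ⟨a, ha⟩ := hSspan x
        refine ⟨a / c₀, (hmemE _).mpr ⟨K.sub_mem hx (K.smul_mem _ hx₀K), ?_⟩⟩
        rw [map_sub, map_smul, ha, hc₀, smul_smul]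
        rw [div_mul_cancel₀ a hc₀0, sub_self]
      -- the vector e spanning the orthocomplement of E in K
      set e : H := x₀ - ↑(orthogonalProjection E x₀) with hedef
      have heE : e ∈ Eᗮ := sub_starProjection_mem_orthogonal x₀
      have heK : e ∈ K := K.sub_mem hx₀K (hEK _ (orthogonalProjection E x₀).2)
      have he0 : e ≠ 0 := by
        intro h0
        have : x₀ ∈ E := by
          have h1 : x₀ = ↑(orthogonalProjection E x₀) := by
            have := sub_eq_zero.mp h0; exact this
          rw [h1]; exact (orthogonalProjection E x₀).2
        exact hSx₀ (hSE x₀ this)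
      set eh : H := (‖e‖ : ℂ)⁻¹ • e with hehdef
      have hehE : eh ∈ Eᗮ := Eᗮ.smul_mem _ heE
      have hehK : eh ∈ K := K.smul_mem _ heK
      have heh1 : ‖eh‖ = 1 := by
        rw [hehdef, norm_smul, norm_inv]
        have : ‖((‖e‖ : ℝ) : ℂ)‖ = ‖e‖ := by
          simp [Complex.norm_real]
        rw [this]
        field_simp [norm_ne_zero_iff.mpr he0]
      have heheh : ⟪eh, eh⟫_ℂ = 1 := by
        rw [inner_self_eq_norm_sq_to_K, heh1]; norm_num
      have hEspan : ∀ z, z ∈ Eᗮ → z ∈ K → z = ⟪eh, z⟫_ℂ • eh := by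
        intro z hzE hzK
        obtain ⟨c, hc⟩ := hdecomp z hzK
        have h1 : z - c • e ∈ E := by
          have heq : z - c • e = (z - c • x₀) + c • (↑(orthogonalProjection E x₀) : H) := by
            rw [hedef]; module
          rw [heq]
          exact E.add_mem hc (E.smul_mem _ (orthogonalProjection E x₀).2)
        have h2 : z - c • e ∈ Eᗮ := Eᗮ.sub_mem hzE (Eᗮ.smul_mem _ heE)
        have h3 : z - c • e = 0 := by
          have := Submodule.inner_right_of_mem_orthogonal h1 h2
          exact inner_self_eq_zero.mp this
        have hz : z = c • e := by
          have := sub_eq_zero.mp h3; exact this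
        rw [hehdef]
        exact span_coeff he0 c hz
      -- the image F = U(E), inside K
      set F : Submodule ℂ H := E.map (U.toLinearEquiv : H →ₗ[ℂ] H) with hFdef
      have hFc : IsClosed (F : Set H) := closed_image U E hEc
      haveI : CompleteSpace F := hFc.completeSpace_coe
      have hFK : ∀ y ∈ F, y ∈ K := by
        rintro - ⟨x, hx, rfl⟩
        exact hUE x hx
      have hUF : ∀ x ∈ E, U x ∈ F := fun x hx => ⟨x, hx, rfl⟩
      have hT₀K : U x₀ + S x₀ ∈ K := hinv x₀ hx₀K
      set f : H := (U x₀ + S x₀) - ↑(orthogonalProjection F (U x₀ + S x₀)) with hfdef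
      have hfF : f ∈ Fᗮ := sub_starProjection_mem_orthogonal _
      have hfK : f ∈ K := K.sub_mem hT₀K (hFK _ (orthogonalProjection F _).2)
      -- the operator maps K into F ⊔ span {f}
      have hTW : ∀ x ∈ K, U x + S x ∈ F ⊔ span ℂ {f} := by
        intro x hx
        obtain ⟨c, hc⟩ := hdecomp x hx
        have h1 : U (x - c • x₀) ∈ F := hUF _ hc
        have hSc : S (x - c • x₀) = 0 := hSE _ hc
        have h2 : U x + S x = U (x - c • x₀) + c • (U x₀ + S x₀) := by
          have h3 : S x = c • S x₀ := by
            have := hSc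
            rw [map_sub, map_smul, sub_eq_zero] at this
            exact this
          rw [map_sub, map_smul, h3]; module
        rw [h2]
        have h4 : (U x₀ + S x₀) ∈ F ⊔ span ℂ {f} := by
          have h5 : U x₀ + S x₀ = ↑(orthogonalProjection F (U x₀ + S x₀)) + f := by
            rw [hfdef]; abel
          rw [h5]
          exact add_mem (le_sup_left (α := Submodule ℂ H)
            (orthogonalProjection F _).2)
            (le_sup_right (α := Submodule ℂ H) (mem_span_singleton_self f))
        exact add_mem (le_sup_left (α := Submodule ℂ H) h1)
          ((F ⊔ span ℂ {f}).smul_mem c h4)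
      -- F ⊔ span {f} is closed
      have hWiff : ∀ u : H, u ∈ F ⊔ span ℂ {f} ↔ u - (⟪f, u⟫_ℂ / (‖f‖ : ℂ) ^ 2) • f ∈ F := by
        intro u
        constructor
        · intro hu
          obtain ⟨g, hgF, w, hw, hgw⟩ := mem_sup.mp hu
          obtain ⟨c, rfl⟩ := mem_span_singleton.mp hw
          have hfg : ⟪f, g⟫_ℂ = 0 := Submodule.inner_left_of_mem_orthogonal hgF hfF
          by_cases hf0 : f = 0
          · have : u = g := by rw [← hgw, hf0, smul_zero, add_zero]
            rw [this, hf0, smul_zero, sub_zero]; exact hgF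
          · have hfu : ⟪f, u⟫_ℂ = c * (‖f‖ : ℂ) ^ 2 := by
              rw [← hgw, inner_add_right, hfg, zero_add, inner_smul_right,
                inner_self_eq_norm_sq_to_K]
              norm_cast
            have : u - (⟪f, u⟫_ℂ / (‖f‖ : ℂ) ^ 2) • f = g := by
              rw [hfu]
              have hfn : ((‖f‖ : ℂ)) ^ 2 ≠ 0 := by
                simp [norm_ne_zero_iff.mpr hf0]
              rw [mul_div_assoc, div_self hfn, mul_one, ← hgw]
              abel
            rw [this]; exact hgF
        · intro hu
          have : u = (u - (⟪f, u⟫_ℂ / (‖f‖ : ℂ) ^ 2) • f) + (⟪f, u⟫_ℂ / (‖f‖ : ℂ) ^ 2) • f := by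
            abel
          rw [this]
          exact add_mem (le_sup_left (α := Submodule ℂ H) hu)
            (le_sup_right (α := Submodule ℂ H) (smul_mem _ _ (mem_span_singleton_self f)))
      have hWc : IsClosed ((F ⊔ span ℂ {f} : Submodule ℂ H) : Set H) := by
        have hset : ((F ⊔ span ℂ {f} : Submodule ℂ H) : Set H)
            = (fun u => u - (⟪f, u⟫_ℂ / (‖f‖ : ℂ) ^ 2) • f) ⁻¹' (F : Set H) := by
          ext u
          simpa using hWiff u
        rw [hset]
        refine IsClosed.preimage ?_ hFc
        exact continuous_id.sub ((((innerSL ℂ f).continuous).div_const _).smul continuous_const)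
      have hKW : (K : Set H) ⊆ ((F ⊔ span ℂ {f} : Submodule ℂ H) : Set H) := by
        intro x hx
        have h1 := hdense hx
        have h2 : ((fun x => U x + S x) '' (K : Set H))
            ⊆ ((F ⊔ span ℂ {f} : Submodule ℂ H) : Set H) := by
          rintro - ⟨y, hy, rfl⟩
          exact hTW y hy
        have h3 := closure_mono h2 h1
        rwa [hWc.closure_eq] at h3
      -- F ≠ K
      have hFneK : ¬ ((K : Set H) ⊆ (F : Set H)) := by
        intro hsub
        obtain ⟨y, hyE, hy⟩ := hsub hT₀K
        have hy' : U y = U x₀ + S x₀ := hy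
        have hUsymm : U.symm h = c₀⁻¹ • (y - x₀) := by
          have hh : h = c₀⁻¹ • (S x₀) := by
            rw [hc₀, smul_smul, inv_mul_cancel₀ hc₀0, one_smul]
          have hS₀ : S x₀ = U y - U x₀ := by rw [hy']; abel
          rw [hh, hS₀, map_smul, map_sub, U.symm_apply_apply, U.symm_apply_apply]
        apply hUhK
        rw [hUsymm]
        exact K.smul_mem _ (K.sub_mem (hEK y hyE) hx₀K)
      have hf0 : f ≠ 0 := by
        intro h0
        apply hFneK
        intro x hx
        have h1 := hKW hx
        have h2 : x ∈ F ⊔ span ℂ {f} := h1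
        rw [h0, span_zero_singleton, sup_bot_eq] at h2
        exact h2
      set fh : H := (‖f‖ : ℂ)⁻¹ • f with hfhdef
      have hfhF : fh ∈ Fᗮ := Fᗮ.smul_mem _ hfF
      have hfhK : fh ∈ K := K.smul_mem _ hfK
      have hfh1 : ‖fh‖ = 1 := by
        rw [hfhdef, norm_smul, norm_inv]
        have : ‖((‖f‖ : ℝ) : ℂ)‖ = ‖f‖ := by simp [Complex.norm_real]
        rw [this]
        field_simp [norm_ne_zero_iff.mpr hf0]
      have hFspan : ∀ z, z ∈ Fᗮ → z ∈ K → z = ⟪fh, z⟫_ℂ • fh := by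
        intro z hzF hzK
        obtain ⟨g, hgF, w, hw, hgw⟩ := mem_sup.mp (hKW hzK)
        obtain ⟨c, rfl⟩ := mem_span_singleton.mp hw
        have hgperp : g ∈ Fᗮ := by
          have hgz : g = z - c • f := by rw [← hgw]; abel
          rw [hgz]
          exact Fᗮ.sub_mem hzF (Fᗮ.smul_mem _ hfF)
        have hg0 : g = 0 := by
          have := Submodule.inner_right_of_mem_orthogonal hgF hgperp
          exact inner_self_eq_zero.mp this
        have hz : z = c • f := by rw [← hgw, hg0, zero_add]
        rw [hfhdef]
        exact span_coeff hf0 c hz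
      -- construction of the unitary V
      set Ucl : H →L[ℂ] H := U.toLinearIsometry.toContinuousLinearMap with hUcldef
      set B : H →L[ℂ] H :=
        Ucl.comp ((E.subtypeL).comp (orthogonalProjection E)) + (innerSL ℂ eh).smulRight fh
        with hBdef
      have hB : ∀ x : H, B x = U (↑(orthogonalProjection E x)) + ⟪eh, x⟫_ℂ • fh := by
        intro x
        simp [hBdef, hUcldef]
      have hBmem : ∀ x : H, B x ∈ K := by
        intro x
        rw [hB]
        exact K.add_mem (hFK _ (hUF _ (orthogonalProjection E x).2)) (K.smul_mem _ hfhK)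
      set Vc : (↥K) →L[ℂ] (↥K) := (B.comp K.subtypeL).codRestrict K (fun x => hBmem _)
        with hVcdef
      have hVc : ∀ x : ↥K, (Vc x : H) = U (↑(orthogonalProjection E (x : H))) + ⟪eh, (x : H)⟫_ℂ • fh := by
        intro x
        rw [hVcdef]
        exact hB _
      -- orthogonal decomposition of elements of K
      have hxdec : ∀ z ∈ K, z = ↑(orthogonalProjection E z) + ⟪eh, z⟫_ℂ • eh := by
        intro z hz
        have hq : z - ↑(orthogonalProjection E z) ∈ Eᗮ :=
          sub_starProjection_mem_orthogonal z
        have hqK : z - ↑(orthogonalProjection E z) ∈ K :=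
          K.sub_mem hz (hEK _ (orthogonalProjection E z).2)
        have h1 := hEspan _ hq hqK
        have h2 : ⟪eh, (↑(orthogonalProjection E z) : H)⟫_ℂ = 0 :=
          Submodule.inner_left_of_mem_orthogonal (orthogonalProjection E z).2 hehE
        have h3 : ⟪eh, z⟫_ℂ = ⟪eh, z - ↑(orthogonalProjection E z)⟫_ℂ := by
          rw [inner_sub_right, h2, sub_zero]
        rw [h3, ← h1]
        abel
      have hnorm : ∀ x : ↥K, ‖Vc x‖ = ‖x‖ := by
        intro x
        have hxd := hxdec (x : H) x.2
        set p : H := ↑(orthogonalProjection E (x : H)) with hpdef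
        set t : ℂ := ⟪eh, (x : H)⟫_ℂ with htdef
        have hpE : p ∈ E := (orthogonalProjection E (x : H)).2
        have h1 : ⟪U p, t • fh⟫_ℂ = 0 := by
          rw [inner_smul_right, Submodule.inner_right_of_mem_orthogonal (hUF _ hpE) hfhF,
            mul_zero]
        have h2 : ⟪p, t • eh⟫_ℂ = 0 := by
          rw [inner_smul_right, Submodule.inner_right_of_mem_orthogonal hpE hehE, mul_zero]
        have e1 := norm_add_sq_eq_norm_sq_add_norm_sq_of_inner_eq_zero _ _ h1
        have e2 := norm_add_sq_eq_norm_sq_add_norm_sq_of_inner_eq_zero _ _ h2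
        have hnx : ‖(x : H)‖ = ‖p + t • eh‖ := by rw [← hxd]
        have hsm : ‖t • fh‖ = ‖t • eh‖ := by
          simp only [norm_smul, heh1, hfh1]
        have hUp : ‖U p‖ = ‖p‖ := U.norm_map p
        have hsq : ‖Vc x‖ * ‖Vc x‖ = ‖x‖ * ‖x‖ := by
          show ‖(Vc x : H)‖ * ‖(Vc x : H)‖ = ‖(x : H)‖ * ‖(x : H)‖
          calc ‖(Vc x : H)‖ * ‖(Vc x : H)‖
              = ‖U p + t • fh‖ * ‖U p + t • fh‖ := by rw [hVc x]
            _ = ‖U p‖ * ‖U p‖ + ‖t • fh‖ * ‖t • fh‖ := e1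
            _ = ‖p‖ * ‖p‖ + ‖t • eh‖ * ‖t • eh‖ := by rw [hUp, hsm]
            _ = ‖p + t • eh‖ * ‖p + t • eh‖ := e2.symm
            _ = ‖(x : H)‖ * ‖(x : H)‖ := by rw [← hxd]
        rcases mul_self_eq_mul_self_iff.mp hsq with heq | heq
        · exact heq
        · have h3 : (0:ℝ) ≤ ‖Vc x‖ := norm_nonneg _
          have h4 : (0:ℝ) ≤ ‖x‖ := norm_nonneg _
          have h5 : ‖x‖ = 0 := by linarith [heq]
          rw [heq, h5, neg_zero]
      set Viso : (↥K) →ₗᵢ[ℂ] (↥K) := ⟨Vc.toLinearMap, hnorm⟩ with hVisodef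
      have hsurj : Function.Surjective Viso := by
        intro y
        have hr : (y : H) - ↑(orthogonalProjection F (y : H)) ∈ Fᗮ :=
          sub_starProjection_mem_orthogonal _
        have hrK : (y : H) - ↑(orthogonalProjection F (y : H)) ∈ K :=
          K.sub_mem y.2 (hFK _ (orthogonalProjection F (y : H)).2)
        have h1 := hFspan _ hr hrK
        have h2 : ⟪fh, (↑(orthogonalProjection F (y : H)) : H)⟫_ℂ = 0 :=
          Submodule.inner_left_of_mem_orthogonal (orthogonalProjection F (y : H)).2 hfhF
        set s : ℂ := ⟪fh, (y : H)⟫_ℂ with hsdef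
        have hydec : (y : H) = ↑(orthogonalProjection F (y : H)) + s • fh := by
          have h3 : s = ⟪fh, (y : H) - ↑(orthogonalProjection F (y : H))⟫_ℂ := by
            rw [inner_sub_right, h2, sub_zero]
          rw [h3, ← h1]
          abel
        obtain ⟨p, hpE, hp⟩ := (orthogonalProjection F (y : H)).2
        have hp' : U p = ↑(orthogonalProjection F (y : H)) := hp
        have hxxK : p + s • eh ∈ K := K.add_mem (hEK p hpE) (K.smul_mem s hehK)
        refine ⟨⟨p + s • eh, hxxK⟩, ?_⟩
        apply Subtype.ext
        show ((Vc ⟨p + s • eh, hxxK⟩ : ↥K) : H) = (y : H)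
        rw [hVc ⟨p + s • eh, hxxK⟩]
        have hPp : (↑(orthogonalProjection E (p + s • eh)) : H) = p := by
          rw [map_add, map_smul]
          have hPeh : orthogonalProjection E eh = 0 :=
            orthogonalProjection_mem_subspace_orthogonalComplement_eq_zero hehE
          have hPpp : (↑(orthogonalProjection E p) : H) = p :=
            starProjection_eq_self_iff.mpr hpE
          push_cast [hPeh, hPpp]
          simp [hPpp, hPeh]
        have hinner : ⟪eh, p + s • eh⟫_ℂ = s := by
          rw [inner_add_right, inner_smul_right,
            Submodule.inner_left_of_mem_orthogonal hpE hehE, heheh, zero_add, mul_one]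
        rw [hPp, hinner, hp', ← hydec]
      -- assembling
      set Tc : (↥K) →L[ℂ] (↥K) := ((Ucl + S).comp K.subtypeL).codRestrict K
        (fun x => by simpa [hUcldef] using hinv (x : H) x.2) with hTcdef
      have hTc : ∀ x : ↥K, ((Tc x : ↥K) : H) = U (x : H) + S (x : H) := by
        intro x
        rw [hTcdef]
        simp only [ContinuousLinearMap.coe_codRestrict_apply, ContinuousLinearMap.coe_comp',
          Function.comp_apply, ContinuousLinearMap.add_apply, Submodule.coe_subtypeL',
          Submodule.coe_subtype, hUcldef]
        rfl
      set Rc : (↥K) →L[ℂ] (↥K) := Tc - Vc with hRcdef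
      have hRc : ∀ x : ↥K, ((Rc x : ↥K) : H) = (U (x : H) + S (x : H)) - ((Vc x : ↥K) : H) := by
        intro x
        rw [hRcdef]
        simp only [ContinuousLinearMap.sub_apply, AddSubgroupClass.coe_sub]
        rw [hTc]
      refine ⟨LinearIsometryEquiv.ofSurjective Viso hsurj, Rc, ?_, ?_⟩
      · -- rank at most 2
        apply rank_aux K Rc ((Rc ⟨eh, hehK⟩ : ↥K) : H)
        intro x
        refine ⟨⟪eh, (x : H)⟫_ℂ, ?_⟩
        have hxd := hxdec (x : H) x.2
        have hpE : (↑(orthogonalProjection E (x : H)) : H) ∈ E :=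
          (orthogonalProjection E (x : H)).2
        have hSp : S (↑(orthogonalProjection E (x : H)) : H) = 0 := hSE _ hpE
        have hPeh : (↑(orthogonalProjection E eh) : H) = (0 : H) := by
          rw [orthogonalProjection_mem_subspace_orthogonalComplement_eq_zero hehE]
          rfl
        have hRx : ((Rc x : ↥K) : H) = (U (x : H) + S (x : H))
            - (U (↑(orthogonalProjection E (x : H))) + ⟪eh, (x : H)⟫_ℂ • fh) := by
          rw [hRc x, hVc x]
        have hReh : ((Rc ⟨eh, hehK⟩ : ↥K) : H) = (U eh + S eh) - (U 0 + ⟪eh, eh⟫_ℂ • fh) := by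
          rw [hRc _, hVc _]
          simp only [hPeh]
        set p : H := ↑(orthogonalProjection E (x : H)) with hpdef
        set t : ℂ := ⟪eh, (x : H)⟫_ℂ with htdef
        rw [hRx, hReh, heheh, map_zero, hxd]
        simp only [map_add, map_smul, hSp, ContinuousLinearMap.map_smul]
        module
      · -- the operator identity
        intro x
        have h1 : ((LinearIsometryEquiv.ofSurjective Viso hsurj) x : ↥K) = Vc x := rfl
        rw [h1, hRc x]
        abel
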